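/- For every 𝒜 ∈ U(p,q) there exists a unique matrix Y ∈ 𝔫, i.e. a unique Y of the block form Y = (0, B; B*, 0) with B a p×q complex matrix, such that the matrix exponential e^Y equals √(𝒜*𝒜), the unique positive definite square root of 𝒜*𝒜. Moreover, 𝒜 can be written uniquely as 𝒜 = U e^Y with U a block diagonal unitary matrix (U ∈ U(p)×U(q)) and Y ∈ 𝔫, and this decomposition is the polar decomposition: U = 𝒜(√(𝒜*𝒜))⁻¹. -/

import Mathlib

open Matrix
open scoped ComplexOrder

/-- The matrix I_{p,q} = diag(I_p, −I_q) defining the indefinite Hermitian form of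
signature (p,q). -/
def Ipq (p q : ℕ) : Matrix (Fin p ⊕ Fin q) (Fin p ⊕ Fin q) ℂ :=
  Matrix.fromBlocks 1 0 0 (-1)

section Aux

variable {m : Type*} [Fintype m] [DecidableEq m]

private lemma exp_eq_cfc_real_exp {Y : Matrix m m ℂ} (hY : Y.IsHermitian) :
    NormedSpace.exp Y = cfc Real.exp Y := by
  rw [hY.cfc_eq]
  set V : Matrix m m ℂ := (hY.eigenvectorUnitary : Matrix m m ℂ) with hVdef
  have hVsV : Vᴴ * V = 1 := by
    simpa [Matrix.star_eq_conjTranspose] using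
      Unitary.star_mul_self_of_mem hY.eigenvectorUnitary.2
  have hVVs : V * Vᴴ = 1 := mul_eq_one_comm.mp hVsV
  have hVunit : IsUnit V := (Matrix.isUnit_iff_isUnit_det V).mpr
    (IsUnit.of_mul_eq_one _ (by rw [← Matrix.det_mul, hVVs, Matrix.det_one]))
  have hVinv : V⁻¹ = Vᴴ := Matrix.inv_eq_left_inv hVsV
  have hcoe : ((RCLike.ofReal : ℝ → ℂ)) = Complex.ofReal := rfl
  have hdiag : NormedSpace.exp (diagonal ((RCLike.ofReal : ℝ → ℂ) ∘ hY.eigenvalues)) =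
      diagonal ((RCLike.ofReal : ℝ → ℂ) ∘ Real.exp ∘ hY.eigenvalues) := by
    rw [Matrix.exp_diagonal, Pi.exp_def, Matrix.diagonal_eq_diagonal_iff]
    intro i
    simp only [hcoe, ← Complex.exp_eq_exp_ℂ, Function.comp_apply, Complex.ofReal_exp]
  conv_lhs => rw [hY.spectral_theorem]
  rw [Unitary.conjStarAlgAut_apply, Matrix.star_eq_conjTranspose, ← hVdef, ← hVinv, Matrix.exp_conj V _ hVunit, hdiag,
    hVinv, Matrix.IsHermitian.cfc, Unitary.conjStarAlgAut_apply, Matrix.star_eq_conjTranspose, ← hVdef]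

private lemma cfc_log_exp {Y : Matrix m m ℂ} (hY : Y.IsHermitian) :
    cfc Real.log (NormedSpace.exp Y) = Y := by
  have hsa : IsSelfAdjoint Y := hY
  rw [exp_eq_cfc_real_exp hY, ← cfc_comp Real.log Real.exp Y hsa
    (Real.continuousOn_log.mono (by rintro - ⟨x, -, rfl⟩; exact (Real.exp_pos x).ne'))
    Real.continuous_exp.continuousOn]
  rw [show Real.log ∘ Real.exp = id from funext Real.log_exp, cfc_id ℝ Y hsa]

private lemma herm_exp_inj {Y Z : Matrix m m ℂ} (hY : Y.IsHermitian) (hZ : Z.IsHermitian)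
    (h : NormedSpace.exp Y = NormedSpace.exp Z) : Y = Z := by
  rw [← cfc_log_exp hY, h, cfc_log_exp hZ]

private lemma exp_cfc_log_posDef {S : Matrix m m ℂ} (hS : S.PosDef) :
    NormedSpace.exp (cfc Real.log S) = S := by
  have hsa : IsSelfAdjoint S := hS.isHermitian
  have hspec : spectrum ℝ S ⊆ Set.Ioi (0 : ℝ) := by
    rw [hS.isHermitian.spectrum_real_eq_range_eigenvalues]
    rintro - ⟨i, rfl⟩
    exact hS.eigenvalues_pos i
  have hYh : (cfc Real.log S).IsHermitian := cfc_predicate Real.log S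
  rw [exp_eq_cfc_real_exp hYh, ← cfc_comp Real.exp Real.log S hsa
    Real.continuous_exp.continuousOn
    (Real.continuousOn_log.mono (fun x hx => (hspec hx).out.ne'))]
  rw [cfc_congr (f := Real.exp ∘ Real.log) (g := id)
    (fun x hx => Real.exp_log (hspec hx)), cfc_id ℝ S hsa]

private lemma halve {α : Type*} [AddCommGroup α] [Module ℂ α] {a : α} (h : a = -a) : a = 0 := by
  have h2 : (2 : ℂ) • a = 0 := by
    rw [two_smul]; nth_rewrite 2 [h]; simp
  simpa [smul_eq_zero] using h2

private lemma block_of_herm_anticomm {p q : ℕ}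
    {Y : Matrix (Fin p ⊕ Fin q) (Fin p ⊕ Fin q) ℂ}
    (hY : Y.IsHermitian) (hJ : Ipq p q * Y * Ipq p q = -Y) :
    ∃ B : Matrix (Fin p) (Fin q) ℂ, Y = Matrix.fromBlocks 0 B Bᴴ 0 := by
  obtain ⟨A, B, C, D, h4⟩ : ∃ A B C D, Y = Matrix.fromBlocks A B C D :=
    ⟨_, _, _, _, (Matrix.fromBlocks_toBlocks Y).symm⟩
  subst h4
  have hY' := hY.eq
  rw [Matrix.fromBlocks_conjTranspose] at hY'
  simp only [Ipq, Matrix.fromBlocks_multiply, Matrix.fromBlocks_neg, Matrix.fromBlocks_inj,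
    Matrix.mul_one, Matrix.one_mul, Matrix.zero_mul, Matrix.mul_zero, add_zero, zero_add,
    Matrix.neg_mul, Matrix.mul_neg, neg_neg, one_mul, mul_one, zero_mul, mul_zero] at hJ hY'
  obtain ⟨hA, -, -, hD⟩ := hJ
  obtain ⟨-, -, hBC, -⟩ := hY'
  refine ⟨B, ?_⟩
  rw [halve hA, halve hD, hBC]

private lemma blockdiag_of_comm {p q : ℕ}
    {U : Matrix (Fin p ⊕ Fin q) (Fin p ⊕ Fin q) ℂ}
    (hJ : Ipq p q * U * Ipq p q = U) :
    U = Matrix.fromBlocks U.toBlocks₁₁ 0 0 U.toBlocks₂₂ := by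
  obtain ⟨A, B, C, D, h4⟩ : ∃ A B C D, U = Matrix.fromBlocks A B C D :=
    ⟨_, _, _, _, (Matrix.fromBlocks_toBlocks U).symm⟩
  rw [h4] at hJ ⊢
  simp only [Ipq, Matrix.fromBlocks_multiply, Matrix.fromBlocks_inj,
    Matrix.mul_one, Matrix.one_mul, Matrix.zero_mul, Matrix.mul_zero, add_zero, zero_add,
    Matrix.neg_mul, Matrix.mul_neg, neg_neg, one_mul, mul_one, zero_mul, mul_zero] at hJ
  obtain ⟨-, hB, hC, -⟩ := hJ
  simp only [Matrix.toBlocks_fromBlocks₁₁, Matrix.toBlocks_fromBlocks₂₂, Matrix.fromBlocks_inj]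
  exact ⟨trivial, halve hB.symm, halve hC.symm, trivial⟩

private lemma herm_block {p q : ℕ} (B : Matrix (Fin p) (Fin q) ℂ) :
    (Matrix.fromBlocks 0 B Bᴴ 0).IsHermitian := by
  rw [Matrix.IsHermitian, Matrix.fromBlocks_conjTranspose]
  simp

open scoped MatrixOrder in
theorem Matrix.PosSemidef.eq_sqrt_of_sq_eq {n : Type*} [Fintype n] [DecidableEq n]
    {A : Matrix n n ℂ} (hA : A.PosSemidef) {B : Matrix n n ℂ} (_hB : B.PosSemidef)
    (h : A ^ 2 = B) : A = CFC.sqrt B := by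
  rw [← h, CFC.sqrt_sq A (Matrix.nonneg_iff_posSemidef.mpr hA)]

end Aux

set_option maxHeartbeats 1000000 in
/-- For every 𝒜 ∈ U(p,q) there is a unique Y ∈ 𝔫, i.e. of block form
Y = (0, B; B*, 0), with e^Y = √(𝒜*𝒜) (the unique positive definite square root of 𝒜*𝒜, encoded
by `hS`/`hSS`).  Moreover 𝒜 = U e^Y with U ∈ U(p)×U(q) (block diagonal unitary) and Y ∈ 𝔫 in a
unique way, and this decomposition is the polar decomposition: U = 𝒜(√(𝒜*𝒜))⁻¹ and e^Y = √(𝒜*𝒜). -/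
theorem polar_decomposition_indefinite_unitary {p q : ℕ} (hp : 1 ≤ p) (hq : 1 ≤ q)
    (𝒜 : Matrix (Fin p ⊕ Fin q) (Fin p ⊕ Fin q) ℂ)
    (h𝒜 : 𝒜ᴴ * Ipq p q * 𝒜 = Ipq p q)
    (S : Matrix (Fin p ⊕ Fin q) (Fin p ⊕ Fin q) ℂ) (hS : S.PosDef) (hSS : S * S = 𝒜ᴴ * 𝒜) :
    (∃! Y : Matrix (Fin p ⊕ Fin q) (Fin p ⊕ Fin q) ℂ,
      (∃ B : Matrix (Fin p) (Fin q) ℂ, Y = Matrix.fromBlocks 0 B Bᴴ 0) ∧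
      NormedSpace.exp Y = S) ∧
    (∃! UY : Matrix (Fin p ⊕ Fin q) (Fin p ⊕ Fin q) ℂ ×
        Matrix (Fin p ⊕ Fin q) (Fin p ⊕ Fin q) ℂ,
      (∃ (U₁ : Matrix (Fin p) (Fin p) ℂ) (U₂ : Matrix (Fin q) (Fin q) ℂ),
        U₁ᴴ * U₁ = 1 ∧ U₂ᴴ * U₂ = 1 ∧ UY.1 = Matrix.fromBlocks U₁ 0 0 U₂) ∧
      (∃ B : Matrix (Fin p) (Fin q) ℂ, UY.2 = Matrix.fromBlocks 0 B Bᴴ 0) ∧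
      𝒜 = UY.1 * NormedSpace.exp UY.2) ∧
    (∀ UY : Matrix (Fin p ⊕ Fin q) (Fin p ⊕ Fin q) ℂ ×
        Matrix (Fin p ⊕ Fin q) (Fin p ⊕ Fin q) ℂ,
      ((∃ (U₁ : Matrix (Fin p) (Fin p) ℂ) (U₂ : Matrix (Fin q) (Fin q) ℂ),
        U₁ᴴ * U₁ = 1 ∧ U₂ᴴ * U₂ = 1 ∧ UY.1 = Matrix.fromBlocks U₁ 0 0 U₂) ∧
      (∃ B : Matrix (Fin p) (Fin q) ℂ, UY.2 = Matrix.fromBlocks 0 B Bᴴ 0) ∧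
      𝒜 = UY.1 * NormedSpace.exp UY.2) →
        UY.1 = 𝒜 * S⁻¹ ∧ NormedSpace.exp UY.2 = S) := by
  classical
  set J := Ipq p q with hJdef
  have hJH : Jᴴ = J := by
    simp [hJdef, Ipq, Matrix.fromBlocks_conjTranspose]
  have hJJ : J * J = 1 := by
    simp [hJdef, Ipq, Matrix.fromBlocks_multiply, Matrix.fromBlocks_one]
  have hJJ' : ∀ X : Matrix (Fin p ⊕ Fin q) (Fin p ⊕ Fin q) ℂ, J * (J * X) = X := fun X => by
    rw [← Matrix.mul_assoc, hJJ, Matrix.one_mul]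
  have hJunit : IsUnit J := (Matrix.isUnit_iff_isUnit_det J).mpr
    (IsUnit.of_mul_eq_one _ (by rw [← Matrix.det_mul, hJJ, Matrix.det_one]))
  have hJinv : J⁻¹ = J := Matrix.inv_eq_left_inv hJJ
  have hdetA : IsUnit 𝒜.det := by
    have hdJ : IsUnit J.det := IsUnit.of_mul_eq_one _
      (by rw [← Matrix.det_mul, hJJ, Matrix.det_one])
    have h := congrArg Matrix.det h𝒜
    rw [Matrix.det_mul, Matrix.det_mul] at h
    rw [← h] at hdJ
    exact isUnit_of_mul_isUnit_right hdJ
  have hdetAH : IsUnit 𝒜ᴴ.det := by rw [Matrix.det_conjTranspose]; exact hdetA.star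
  have hAinv : 𝒜⁻¹ = J * 𝒜ᴴ * J := Matrix.inv_eq_left_inv (by
    calc J * 𝒜ᴴ * J * 𝒜 = J * (𝒜ᴴ * J * 𝒜) := by simp only [Matrix.mul_assoc]
    _ = 1 := by rw [h𝒜, hJJ])
  have hJAJ : J * 𝒜 * J = (𝒜ᴴ)⁻¹ := by
    have h := congrArg Matrix.conjTranspose hAinv
    rw [Matrix.conjTranspose_nonsing_inv] at h
    rw [h]
    simp only [Matrix.conjTranspose_mul, hJH, Matrix.conjTranspose_conjTranspose,
      Matrix.mul_assoc]
  have hSdet : IsUnit S.det := hS.det_pos.ne'.isUnit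
  have hS'S : S⁻¹ * S = 1 := Matrix.nonsing_inv_mul S hSdet
  have hSS' : S * S⁻¹ = 1 := Matrix.mul_nonsing_inv S hSdet
  have hSH : Sᴴ = S := hS.isHermitian
  have hSinvH : (S⁻¹)ᴴ = S⁻¹ := by rw [Matrix.conjTranspose_nonsing_inv, hSH]
  have hPinvPsd : Matrix.PosSemidef (𝒜ᴴ * 𝒜)⁻¹ := by
    have h := Matrix.posSemidef_conjTranspose_mul_self S⁻¹
    rw [hSinvH] at h
    rw [← hSS, Matrix.mul_inv_rev]
    exact h
  have hPPsd : Matrix.PosSemidef (𝒜ᴴ * 𝒜) := by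
    have h := Matrix.posSemidef_conjTranspose_mul_self S
    rw [hSH] at h
    rw [← hSS]
    exact h
  have hJSJpsd : Matrix.PosSemidef (J * S * J) := by
    have h := hS.posSemidef.conjTranspose_mul_mul_same J
    rwa [hJH] at h
  have hsq1 : (J * S * J) ^ 2 = (𝒜ᴴ * 𝒜)⁻¹ := by
    rw [pow_two]
    calc (J * S * J) * (J * S * J) = J * (S * (J * (J * (S * J)))) := by
          simp only [Matrix.mul_assoc]
    _ = J * (S * (S * J)) := by rw [hJJ' (S * J)]
    _ = J * (𝒜ᴴ * 𝒜 * J) := by rw [← Matrix.mul_assoc S S, hSS]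
    _ = J * (𝒜ᴴ * (J * (J * (𝒜 * J)))) := by rw [hJJ' (𝒜 * J)]; simp only [Matrix.mul_assoc]
    _ = (J * 𝒜ᴴ * J) * (J * 𝒜 * J) := by simp only [Matrix.mul_assoc]
    _ = 𝒜⁻¹ * (𝒜ᴴ)⁻¹ := by rw [← hAinv, hJAJ]
    _ = (𝒜ᴴ * 𝒜)⁻¹ := (Matrix.mul_inv_rev _ _).symm
  have hsq2 : (S⁻¹) ^ 2 = (𝒜ᴴ * 𝒜)⁻¹ := by rw [pow_two, ← Matrix.mul_inv_rev, hSS]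
  have hJSJ : J * S * J = S⁻¹ :=
    (hJSJpsd.eq_sqrt_of_sq_eq hPinvPsd hsq1).trans
      (hS.inv.posSemidef.eq_sqrt_of_sq_eq hPinvPsd hsq2).symm
  have hJS'J : J * S⁻¹ * J = S := by
    rw [← hJSJ]
    calc J * (J * S * J) * J = J * (J * (S * (J * J))) := by simp only [Matrix.mul_assoc]
    _ = S := by rw [hJJ, Matrix.mul_one, hJJ' S]
  -- the canonical logarithm
  set Y₀ := cfc Real.log S with hY₀def
  have hY₀h : Y₀.IsHermitian := cfc_predicate Real.log S
  have hexpY₀ : NormedSpace.exp Y₀ = S := exp_cfc_log_posDef hS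
  have hanti : J * Y₀ * J = -Y₀ := by
    have hconjherm : (J * Y₀ * J).IsHermitian := by
      have h := Matrix.isHermitian_conjTranspose_mul_mul J hY₀h
      rwa [hJH] at h
    have hexp : NormedSpace.exp (J * Y₀ * J) = NormedSpace.exp (-Y₀) := by
      rw [show J * Y₀ * J = J * Y₀ * J⁻¹ by rw [hJinv], Matrix.exp_conj J Y₀ hJunit, hJinv,
        hexpY₀, Matrix.exp_neg, hexpY₀]
      exact hJSJ
    exact herm_exp_inj hconjherm hY₀h.neg hexp
  obtain ⟨B₀, hB₀⟩ := block_of_herm_anticomm hY₀h hanti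
  -- the key uniqueness computation
  have key : ∀ UY : Matrix (Fin p ⊕ Fin q) (Fin p ⊕ Fin q) ℂ ×
        Matrix (Fin p ⊕ Fin q) (Fin p ⊕ Fin q) ℂ,
      ((∃ (U₁ : Matrix (Fin p) (Fin p) ℂ) (U₂ : Matrix (Fin q) (Fin q) ℂ),
        U₁ᴴ * U₁ = 1 ∧ U₂ᴴ * U₂ = 1 ∧ UY.1 = Matrix.fromBlocks U₁ 0 0 U₂) ∧
      (∃ B : Matrix (Fin p) (Fin q) ℂ, UY.2 = Matrix.fromBlocks 0 B Bᴴ 0) ∧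
      𝒜 = UY.1 * NormedSpace.exp UY.2) →
        UY.1 = 𝒜 * S⁻¹ ∧ NormedSpace.exp UY.2 = S := by
    rintro ⟨U, Y⟩ ⟨⟨U₁, U₂, hU₁, hU₂, hU⟩, ⟨B, hB⟩, hAeq⟩
    simp only at hU hB hAeq ⊢
    have hUu : Uᴴ * U = 1 := by
      rw [hU, Matrix.fromBlocks_conjTranspose, Matrix.fromBlocks_multiply]
      simp [hU₁, hU₂, Matrix.fromBlocks_one]
    have hYh : Y.IsHermitian := by rw [hB]; exact herm_block B
    set E := NormedSpace.exp Y with hEdef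
    have hEH : Eᴴ = E := by rw [hEdef, ← Matrix.exp_conjTranspose, hYh.eq]
    have hEpsd : E.PosSemidef := by
      have hhalf : ((1/2 : ℂ) • Y)ᴴ = (1/2 : ℂ) • Y := by
        rw [Matrix.conjTranspose_smul, hYh.eq]
        norm_num
      have h2 : (1/2 : ℂ) • Y + (1/2 : ℂ) • Y = Y := by
        rw [← add_smul]; norm_num
      have hEeq : E = (NormedSpace.exp ((1/2 : ℂ) • Y))ᴴ *
          NormedSpace.exp ((1/2 : ℂ) • Y) := by
        rw [← Matrix.exp_conjTranspose, hhalf]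
        conv_lhs => rw [hEdef, ← h2]
        rw [Matrix.exp_add_of_commute _ _ (Commute.refl _)]
      rw [hEeq]
      exact Matrix.posSemidef_conjTranspose_mul_self _
    have hsq : E ^ 2 = 𝒜ᴴ * 𝒜 := by
      rw [pow_two]
      conv_rhs => rw [hAeq]
      rw [Matrix.conjTranspose_mul, hEH]
      calc E * E = E * (1 * E) := by rw [Matrix.one_mul]
      _ = E * (Uᴴ * U * E) := by rw [hUu]
      _ = E * Uᴴ * (U * E) := by simp only [Matrix.mul_assoc]
    have hE_eq_S : E = S := by
      have h1 := hEpsd.eq_sqrt_of_sq_eq hPPsd hsq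
      have h2 := hS.posSemidef.eq_sqrt_of_sq_eq hPPsd (by rw [pow_two, hSS])
      exact h1.trans h2.symm
    refine ⟨?_, hE_eq_S⟩
    rw [hAeq, hE_eq_S, Matrix.mul_assoc, hSS', Matrix.mul_one]
  -- first uniqueness statement
  have first : ∃! Y : Matrix (Fin p ⊕ Fin q) (Fin p ⊕ Fin q) ℂ,
      (∃ B : Matrix (Fin p) (Fin q) ℂ, Y = Matrix.fromBlocks 0 B Bᴴ 0) ∧
      NormedSpace.exp Y = S := by
    refine ⟨Y₀, ⟨⟨B₀, hB₀⟩, hexpY₀⟩, ?_⟩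
    rintro Y ⟨⟨B, rfl⟩, hexp⟩
    exact herm_exp_inj (herm_block B) hY₀h (by rw [hexp, hexpY₀])
  -- the canonical unitary part
  set U₀ := 𝒜 * S⁻¹ with hU₀def
  have hU₀u : U₀ᴴ * U₀ = 1 := by
    rw [hU₀def, Matrix.conjTranspose_mul, hSinvH]
    calc S⁻¹ * 𝒜ᴴ * (𝒜 * S⁻¹) = S⁻¹ * (𝒜ᴴ * 𝒜) * S⁻¹ := by simp only [Matrix.mul_assoc]
    _ = S⁻¹ * (S * S) * S⁻¹ := by rw [hSS]
    _ = S⁻¹ * S * (S * S⁻¹) := by simp only [Matrix.mul_assoc]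
    _ = 1 := by rw [hS'S, hSS', Matrix.one_mul]
  have hkeycalc : (𝒜ᴴ)⁻¹ * S = 𝒜 * S⁻¹ := by
    calc (𝒜ᴴ)⁻¹ * S = (𝒜ᴴ)⁻¹ * (S * (S * S⁻¹)) := by rw [hSS', Matrix.mul_one]
    _ = (𝒜ᴴ)⁻¹ * (S * S * S⁻¹) := by rw [Matrix.mul_assoc S S]
    _ = (𝒜ᴴ)⁻¹ * (𝒜ᴴ * (𝒜 * S⁻¹)) := by rw [hSS]; simp only [Matrix.mul_assoc]
    _ = (𝒜ᴴ)⁻¹ * 𝒜ᴴ * (𝒜 * S⁻¹) := by simp only [Matrix.mul_assoc]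
    _ = 𝒜 * S⁻¹ := by rw [Matrix.nonsing_inv_mul _ hdetAH, Matrix.one_mul]
  have hJUJ : J * U₀ * J = U₀ := by
    rw [hU₀def]
    calc J * (𝒜 * S⁻¹) * J = J * 𝒜 * (J * (J * (S⁻¹ * J))) := by
          rw [hJJ' (S⁻¹ * J)]; simp only [Matrix.mul_assoc]
    _ = (J * 𝒜 * J) * (J * S⁻¹ * J) := by simp only [Matrix.mul_assoc]
    _ = (𝒜ᴴ)⁻¹ * S := by rw [hJAJ, hJS'J]
    _ = 𝒜 * S⁻¹ := hkeycalc
  have hU₀blocks := blockdiag_of_comm hJUJ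
  have hU₀u' : (U₀.toBlocks₁₁)ᴴ * U₀.toBlocks₁₁ = 1 ∧
      (U₀.toBlocks₂₂)ᴴ * U₀.toBlocks₂₂ = 1 := by
    have h := hU₀u
    rw [hU₀blocks, Matrix.fromBlocks_conjTranspose, Matrix.fromBlocks_multiply,
      ← Matrix.fromBlocks_one] at h
    simp only [Matrix.conjTranspose_zero, Matrix.mul_zero, Matrix.zero_mul, add_zero, zero_add,
      Matrix.fromBlocks_inj] at h
    exact ⟨h.1, h.2.2.2⟩
  have second : ∃! UY : Matrix (Fin p ⊕ Fin q) (Fin p ⊕ Fin q) ℂ ×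
        Matrix (Fin p ⊕ Fin q) (Fin p ⊕ Fin q) ℂ,
      (∃ (U₁ : Matrix (Fin p) (Fin p) ℂ) (U₂ : Matrix (Fin q) (Fin q) ℂ),
        U₁ᴴ * U₁ = 1 ∧ U₂ᴴ * U₂ = 1 ∧ UY.1 = Matrix.fromBlocks U₁ 0 0 U₂) ∧
      (∃ B : Matrix (Fin p) (Fin q) ℂ, UY.2 = Matrix.fromBlocks 0 B Bᴴ 0) ∧
      𝒜 = UY.1 * NormedSpace.exp UY.2 := by
    refine ⟨(U₀, Y₀), ⟨⟨U₀.toBlocks₁₁, U₀.toBlocks₂₂, hU₀u'.1, hU₀u'.2, hU₀blocks⟩,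
      ⟨B₀, hB₀⟩, ?_⟩, ?_⟩
    · show 𝒜 = U₀ * NormedSpace.exp Y₀
      rw [hexpY₀, hU₀def, Matrix.mul_assoc, hS'S, Matrix.mul_one]
    · rintro ⟨U, Y⟩ hcond
      obtain ⟨hUeq, hEeq⟩ := key (U, Y) hcond
      simp only at hUeq hEeq
      have hYh : Y.IsHermitian := by
        obtain ⟨B, hB⟩ := hcond.2.1
        simp only at hB
        rw [hB]; exact herm_block B
      have hY : Y = Y₀ := herm_exp_inj hYh hY₀h (by rw [hEeq, hexpY₀])
      rw [Prod.ext_iff]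
      exact ⟨hUeq, hY⟩
  exact ⟨first, second, key⟩
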